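/- If p < 0.25, then the projection of the random Menger sponge onto the x-axis, proj_{(1,0,0)}(M_p), almost surely contains no nonempty open interval. -/

import Mathlib

open MeasureTheory ProbabilityTheory Set ENNReal

/-- The lower-left corners of the seven level-one cubes removed in the construction of the
Menger sponge. -/
def removedVecs : Set (Fin 3 → ℝ) :=
  {![1/3, 1/3, 0], ![1/3, 0, 1/3], ![0, 1/3, 1/3], ![1/3, 1/3, 2/3],
    ![1/3, 2/3, 1/3], ![2/3, 1/3, 1/3], ![1/3, 1/3, 1/3]}

/-- The 20 translation vectors of the Menger sponge IFS:
`{0, 1/3, 2/3}³` minus the seven removed vectors. -/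
def mengerVecs : Set (Fin 3 → ℝ) :=
  {v | ∀ i, v i ∈ ({0, 1/3, 2/3} : Set ℝ)} \ removedVecs

/-- The composition `f_{i₁} ∘ ⋯ ∘ f_{iₙ}` along the word `w`, for the IFS
`f_i(x) = x/3 + t i` on `ℝ³`. -/
noncomputable def wordMap3 (t : Fin 20 → Fin 3 → ℝ) (w : List (Fin 20)) (x : Fin 3 → ℝ) : Fin 3 → ℝ :=
  w.foldr (fun i y => fun j => y j / 3 + t i j) x

/-- A node of the `20`-ary tree is retained (for the realization `ω`) if it and all of
its ancestors carry the label `true`. -/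
def retained {Ω : Type*} (label : List (Fin 20) → Ω → Bool) (ω : Ω)
    (w : List (Fin 20)) : Prop :=
  ∀ v : List (Fin 20), v <+: w → label v ω = true

/-- The random Menger sponge:
`M_p = ⋂_{n ≥ 1} ⋃_{w ∈ E_n} f_w ([0,1]³)` where `E_n` is the set of retained level-`n`
words. -/
noncomputable def mengerSet (t : Fin 20 → Fin 3 → ℝ) {Ω : Type*}
    (label : List (Fin 20) → Ω → Bool) (ω : Ω) : Set (Fin 3 → ℝ) :=
  ⋂ (n : ℕ), ⋂ (_ : 1 ≤ n),
    ⋃ (w : List (Fin 20)) (_ : w.length = n) (_ : retained label ω w),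
      wordMap3 t w '' Set.Icc (0 : Fin 3 → ℝ) 1

/-- The projection `proj_{(a,b,c)}(x,y,z) = ax + by + cz`. -/
noncomputable def proj3 (a b c : ℝ) (v : Fin 3 → ℝ) : ℝ := a * v 0 + b * v 1 + c * v 2
section aux
variable (t : Fin 20 → Fin 3 → ℝ)

/-- first coordinate of the word map, as a 1D map -/
noncomputable def c1 (w : List (Fin 20)) (s : ℝ) : ℝ :=
  w.foldr (fun i y => y / 3 + t i 0) s

lemma c1_nil (s : ℝ) : c1 t List.nil s = s := rfl

lemma c1_cons (i : Fin 20) (w : List (Fin 20)) (s : ℝ) :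
    c1 t (i :: w) s = c1 t w s / 3 + t i 0 := rfl

lemma c1_append (u v : List (Fin 20)) (s : ℝ) :
    c1 t (u ++ v) s = c1 t u (c1 t v s) := by
  simp [c1, List.foldr_append]

lemma wordMap3_apply0 (w : List (Fin 20)) (x : Fin 3 → ℝ) :
    wordMap3 t w x 0 = c1 t w (x 0) := by
  induction w with
  | nil => rfl
  | cons i w ih => simp only [wordMap3, c1, List.foldr_cons] at ih ⊢; rw [ih]

lemma c1_affine (w : List (Fin 20)) (s : ℝ) :
    c1 t w s = c1 t w 0 + s * (1/3 : ℝ) ^ w.length := by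
  induction w with
  | nil => simp [c1_nil]
  | cons i w ih =>
    rw [c1_cons, c1_cons, ih, List.length_cons, pow_succ]; ring

variable (hd : ∀ i : Fin 20, t i 0 = 0 ∨ t i 0 = 1/3 ∨ t i 0 = 2/3)
include hd

lemma c1_bounds (w : List (Fin 20)) :
    0 ≤ c1 t w 0 ∧ c1 t w 0 + (1/3 : ℝ) ^ w.length ≤ 1 := by
  induction w with
  | nil => simp [c1_nil]
  | cons i w ih =>
    rw [c1_cons, List.length_cons, pow_succ]
    rcases hd i with h | h | h <;> rw [h] <;>
      constructor <;> nlinarith [ih.1, ih.2]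

lemma c1_int (w : List (Fin 20)) :
    ∃ K : ℤ, (K : ℝ) = 3 ^ w.length * c1 t w 0 := by
  induction w with
  | nil => exact ⟨0, by simp [c1_nil]⟩
  | cons i w ih =>
    obtain ⟨K, hK⟩ := ih
    rcases hd i with h | h | h
    · exact ⟨K, by rw [List.length_cons, c1_cons, h]; push_cast; rw [hK]; ring⟩
    · exact ⟨K + 3 ^ w.length, by rw [List.length_cons, c1_cons, h]; push_cast; rw [hK]; ring⟩
    · exact ⟨K + 2 * 3 ^ w.length, by rw [List.length_cons, c1_cons, h]; push_cast; rw [hK]; ring⟩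

lemma digit_half (v : List (Fin 20))
    (h : (1/2 : ℝ) ∈ Icc (c1 t v 0) (c1 t v 0 + (1/3 : ℝ) ^ v.length)) :
    ∀ i ∈ v, t i 0 = 1/3 := by
  induction v with
  | nil => simp
  | cons i v ih =>
    have hb := c1_bounds t hd v
    rw [c1_cons, List.length_cons] at h
    obtain ⟨h1, h2⟩ := h
    have hpow : (0:ℝ) < (1/3 : ℝ) ^ v.length := by positivity
    have hi : t i 0 = 1/3 := by
      rcases hd i with h | h | h
      · rw [h] at h2; rw [pow_succ] at h2; nlinarith [hb.1, hb.2]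
      · exact h
      · rw [h] at h1; nlinarith [hb.1, hb.2]
    intro j hj
    rcases List.mem_cons.mp hj with rfl | hj
    · exact hi
    · rw [hi] at h1 h2; rw [pow_succ] at h2
      exact ih ⟨by nlinarith, by nlinarith⟩ j hj
end aux
section aux2
variable (t : Fin 20 → Fin 3 → ℝ)

lemma digit_main (hd : ∀ i : Fin 20, t i 0 = 0 ∨ t i 0 = 1/3 ∨ t i 0 = 2/3)
    (w : List (Fin 20)) (m : ℕ) (hm : m ≤ w.length) (z : ℝ) (K : ℤ)
    (hzK : z = ((K : ℝ) + 1/2) / 3 ^ m)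
    (hz : z ∈ Icc (c1 t w 0) (c1 t w 0 + (1/3 : ℝ) ^ w.length)) :
    ∀ i ∈ w.drop m, t i 0 = 1/3 := by
  set u := w.take m with hu
  set v := w.drop m with hv
  have hul : u.length = m := List.length_take_of_le hm
  have hvl : v.length = w.length - m := List.length_drop
  have hw : w = u ++ v := (List.take_append_drop m w).symm
  obtain ⟨Ku, hKu⟩ := c1_int t hd u
  have hb := c1_bounds t hd v
  -- c1 w 0 = c1 u 0 + c1 v 0 * (1/3)^m
  have hc : c1 t w 0 = c1 t u 0 + c1 t v 0 * (1/3 : ℝ) ^ m := by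
    rw [hw, c1_append, c1_affine t u (c1 t v 0), hul]
  have h3m : (0:ℝ) < 3 ^ m := by positivity
  have hlen : w.length = m + v.length := by omega
  -- z' := 3^m * (z - c1 u 0)
  have hz' : (3:ℝ) ^ m * (z - c1 t u 0) ∈ Icc (c1 t v 0) (c1 t v 0 + (1/3 : ℝ) ^ v.length) := by
    obtain ⟨h1, h2⟩ := hz
    rw [hc] at h1 h2
    have h13 : ((1:ℝ)/3) ^ m = ((3:ℝ)^m)⁻¹ := by rw [one_div, inv_pow]
    have key : (3:ℝ)^m * ((3:ℝ)^m)⁻¹ = 1 := mul_inv_cancel₀ (ne_of_gt h3m)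
    have hsplit : ((1:ℝ)/3) ^ w.length = ((3:ℝ)^m)⁻¹ * (1/3:ℝ) ^ v.length := by
      rw [hlen, pow_add, h13]
    rw [h13] at h1 h2
    rw [hsplit] at h2
    constructor
    · nlinarith [mul_le_mul_of_nonneg_left h1 h3m.le, key]
    · nlinarith [mul_le_mul_of_nonneg_left h2 h3m.le, key]
  -- z' = (K - Ku) + 1/2
  have hKu' : (Ku:ℝ) = 3 ^ m * c1 t u 0 := by rw [hKu, hul]
  have hzval : (3:ℝ) ^ m * (z - c1 t u 0) = ((K - Ku : ℤ) : ℝ) + 1/2 := by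
    have hdiv : (3:ℝ)^m * (((K:ℝ) + 1/2) / 3 ^ m) = (K:ℝ) + 1/2 := by field_simp
    rw [hzK, mul_sub, hdiv]
    push_cast
    linarith [hKu']
  -- integer + 1/2 in [0,1] forces the integer to be 0
  have hN : (K - Ku : ℤ) = 0 := by
    have h0 : (0:ℝ) ≤ ((K - Ku : ℤ) : ℝ) + 1/2 := by
      rw [← hzval]; exact le_trans hb.1 hz'.1
    have h1 : ((K - Ku : ℤ) : ℝ) + 1/2 ≤ 1 := by
      rw [← hzval]; exact le_trans hz'.2 hb.2
    have ha : (K - Ku : ℤ) < 1 := by exact_mod_cast (by linarith : ((K - Ku : ℤ) : ℝ) < 1)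
    have hb' : (-1 : ℤ) < (K - Ku : ℤ) := by
      exact_mod_cast (by linarith : (-1:ℝ) < ((K - Ku : ℤ) : ℝ))
    omega
  rw [hN] at hzval
  simp only [Int.cast_zero, zero_add] at hzval
  rw [hzval] at hz'
  exact digit_half t hd v hz'

end aux2
section aux3

lemma vec_eq3 (v : Fin 3 → ℝ) (a b c : ℝ) (h0 : v 0 = a) (h1 : v 1 = b) (h2 : v 2 = c) :
    v = ![a, b, c] := by
  funext i
  fin_cases i <;> simpa using by assumption

lemma vec_middle (v : Fin 3 → ℝ) (hv : v ∈ mengerVecs) (h0 : v 0 = 1/3) :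
    v = ![1/3, 0, 0] ∨ v = ![1/3, 2/3, 0] ∨ v = ![1/3, 0, 2/3] ∨ v = ![1/3, 2/3, 2/3] := by
  obtain ⟨hall, hnot⟩ := hv
  have h1 := hall 1
  have h2 := hall 2
  simp only [Set.mem_insert_iff, Set.mem_singleton_iff] at h1 h2
  rcases h1 with h1 | h1 | h1 <;> rcases h2 with h2 | h2 | h2
  · exact Or.inl (vec_eq3 v _ _ _ h0 h1 h2)
  · exact absurd (by rw [vec_eq3 v _ _ _ h0 h1 h2]; simp [removedVecs]) hnot
  · exact Or.inr (Or.inr (Or.inl (vec_eq3 v _ _ _ h0 h1 h2)))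
  · exact absurd (by rw [vec_eq3 v _ _ _ h0 h1 h2]; simp [removedVecs]) hnot
  · exact absurd (by rw [vec_eq3 v _ _ _ h0 h1 h2]; simp [removedVecs]) hnot
  · exact absurd (by rw [vec_eq3 v _ _ _ h0 h1 h2]; simp [removedVecs]) hnot
  · exact Or.inr (Or.inl (vec_eq3 v _ _ _ h0 h1 h2))
  · exact absurd (by rw [vec_eq3 v _ _ _ h0 h1 h2]; simp [removedVecs]) hnot
  · exact Or.inr (Or.inr (Or.inr (vec_eq3 v _ _ _ h0 h1 h2)))

open Finset in
lemma middle_card (t : Fin 20 → Fin 3 → ℝ) (htinj : Function.Injective t)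
    (htrange : Set.range t = mengerVecs) (S : Finset (Fin 20))
    (hS : ∀ i ∈ S, t i 0 = 1/3) : S.card ≤ 4 := by
  classical
  have hmem : ∀ i : Fin 20, t i ∈ mengerVecs := by
    intro i; rw [← htrange]; exact Set.mem_range_self i
  set T : Finset (Fin 3 → ℝ) :=
    {![1/3, 0, 0], ![1/3, 2/3, 0], ![1/3, 0, 2/3], ![1/3, 2/3, 2/3]} with hT
  have hcard : S.card ≤ T.card := by
    apply Finset.card_le_card_of_injOn t
    · intro i hi
      rcases vec_middle (t i) (hmem i) (hS i hi) with h | h | h | h <;>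
        simp [hT, h]
    · exact Function.Injective.injOn htinj
  refine hcard.trans ?_
  apply le_trans (Finset.card_insert_le _ _)
  apply Nat.succ_le_succ
  apply le_trans (Finset.card_insert_le _ _)
  apply Nat.succ_le_succ
  apply le_trans (Finset.card_insert_le _ _)
  apply Nat.succ_le_succ
  simp

end aux3
section aux4

lemma list_ofFn_eq (w : List (Fin 20)) (n : ℕ) (h : w.length = n) :
    List.ofFn (fun j : Fin n => w[(j:ℕ)]'(by omega)) = w := by
  apply List.ext_getElem
  · simp [h]
  · intro i h1 h2
    simp

open Finset in
lemma interval_zero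
    (t : Fin 20 → Fin 3 → ℝ) (htinj : Function.Injective t)
    (htrange : Set.range t = mengerVecs)
    (p : ℝ) (hp : p < (0.25 : ℝ))
    {Ω : Type*} [MeasurableSpace Ω] (P : Measure Ω) [IsProbabilityMeasure P]
    (label : List (Fin 20) → Ω → Bool)
    (hindep : ProbabilityTheory.iIndepFun label P)
    (hbern : ∀ w : List (Fin 20), P {ω | label w ω = true} = ENNReal.ofReal p)
    (q r : ℝ) (hqr : q < r) :
    P {ω | Set.Ioo q r ⊆ proj3 1 0 0 '' mengerSet t label ω} = 0 := by
  classical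
  have hd : ∀ i : Fin 20, t i 0 = 0 ∨ t i 0 = 1/3 ∨ t i 0 = 2/3 := by
    intro i
    have hmem : t i ∈ mengerVecs := by rw [← htrange]; exact Set.mem_range_self i
    have h := hmem.1 0
    simpa [Set.mem_insert_iff, Set.mem_singleton_iff] using h
  obtain ⟨m, hm⟩ := exists_pow_lt_of_lt_one (show (0:ℝ) < (r - q)/2 by linarith)
      (show (1/3 : ℝ) < 1 by norm_num)
  set K : ℤ := ⌊q * 3 ^ m⌋ + 1 with hK
  set z : ℝ := ((K : ℝ) + 1/2) / 3 ^ m with hzdef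
  have h3m : (0:ℝ) < 3 ^ m := by positivity
  have hpe : ((1:ℝ)/3) ^ m = ((3:ℝ) ^ m)⁻¹ := by rw [one_div, inv_pow]
  have hzq : q < z := by
    have h1 : q * 3 ^ m < (K : ℝ) := by
      rw [hK]; push_cast; exact Int.lt_floor_add_one _
    rw [hzdef, lt_div_iff₀ h3m]; linarith
  have hzr : z < r := by
    have h1 : (K : ℝ) ≤ q * 3 ^ m + 1 := by
      rw [hK]; push_cast; linarith [Int.floor_le (q * 3 ^ m)]
    have h2 : z ≤ q + 2 * ((3:ℝ)^m)⁻¹ := by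
      rw [hzdef, div_le_iff₀ h3m]
      have he : (q + 2 * ((3:ℝ)^m)⁻¹) * 3 ^ m = q * 3^m + 2 := by
        field_simp
      rw [he]; linarith
    rw [hpe] at hm; linarith
  set Sfin : Finset (Fin 20) := Finset.univ.filter (fun i => t i 0 = 1/3) with hSfin
  have hScard : Sfin.card ≤ 4 :=
    middle_card t htinj htrange _ (by intro i hi; exact (Finset.mem_filter.mp hi).2)
  have main : ∀ k : ℕ,
      P {ω | Set.Ioo q r ⊆ proj3 1 0 0 '' mengerSet t label ω}
        ≤ (20 : ℝ≥0∞) ^ m * ((4 : ℝ≥0∞) * ENNReal.ofReal p) ^ (k+1) := by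
    intro k
    set n := m + (k + 1) with hn
    set F : Finset (Fin n → Fin 20) :=
      Finset.univ.filter (fun f => ∀ j : Fin n, m ≤ (j:ℕ) → t (f j) 0 = 1/3) with hF
    set W : Finset (List (Fin 20)) := F.image List.ofFn with hW
    have hincl : {ω | Set.Ioo q r ⊆ proj3 1 0 0 '' mengerSet t label ω} ⊆
        ⋃ w ∈ W, ⋂ j ∈ Finset.range (k+1), {ω | label (w.take (m+j+1)) ω = true} := by
      intro ω hω
      obtain ⟨v, hv, hproj⟩ := hω (Set.mem_Ioo.mpr ⟨hzq, hzr⟩)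
      have hv0 : v 0 = z := by
        simp only [proj3] at hproj; linarith
      simp only [mengerSet, Set.mem_iInter, Set.mem_iUnion] at hv
      obtain ⟨w, hlen, hret, x, hx, hwx⟩ := hv n (by omega)
      have hx0 : 0 ≤ x 0 ∧ x 0 ≤ 1 := ⟨(Pi.le_def.mp hx.1) 0, (Pi.le_def.mp hx.2) 0⟩
      have hzin : z ∈ Set.Icc (c1 t w 0) (c1 t w 0 + (1/3 : ℝ) ^ w.length) := by
        have hve : v 0 = c1 t w 0 + x 0 * (1/3 : ℝ)^w.length := by
          rw [← hwx, wordMap3_apply0, c1_affine]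
        rw [← hv0, hve]
        have hpw : (0:ℝ) < (1/3:ℝ) ^ w.length := by positivity
        constructor
        · nlinarith [hx0.1, hpw]
        · nlinarith [hx0.2, hpw]
      have hmid : ∀ i ∈ w.drop m, t i 0 = 1/3 :=
        digit_main t hd w m (by omega) z K hzdef hzin
      set f : Fin n → Fin 20 := fun j => w[(j:ℕ)]'(by omega) with hf
      have hofn : List.ofFn f = w := list_ofFn_eq w n hlen
      have hmem : ∀ (idx : ℕ) (hidx : idx < w.length), m ≤ idx → w[idx] ∈ w.drop m := by
        intro idx hidx hmidx
        obtain ⟨i, rfl⟩ : ∃ i, idx = m + i := ⟨idx - m, by omega⟩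
        have hlt2 : i < (w.drop m).length := by
          rw [List.length_drop]; omega
        have hmem' := List.getElem_mem hlt2
        rw [List.getElem_drop] at hmem'
        exact hmem'
      have hfF : f ∈ F := by
        rw [hF, Finset.mem_filter]
        refine ⟨Finset.mem_univ _, fun j hj => ?_⟩
        have hjn : (j:ℕ) < n := j.isLt
        exact hmid _ (hmem (j:ℕ) (by omega) hj)
      refine Set.mem_iUnion₂.mpr ⟨w, Finset.mem_image.mpr ⟨f, hfF, hofn⟩, ?_⟩
      exact Set.mem_iInter₂.mpr fun j _ => hret (w.take (m+j+1)) (List.take_prefix _ _)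
    have hprob : ∀ w ∈ W,
        P (⋂ j ∈ Finset.range (k+1), {ω | label (w.take (m+j+1)) ω = true})
          = (ENNReal.ofReal p) ^ (k+1) := by
      intro w hwW
      have hlen : w.length = n := by
        obtain ⟨f, _, rfl⟩ := Finset.mem_image.mp hwW
        simp [hn]; omega
      have hiInj : Set.InjOn (fun j : ℕ => w.take (m+j+1)) (Finset.range (k+1)) := by
        intro a ha b hb h
        have := congrArg List.length h
        simp only [List.length_take, hlen] at this
        simp only [Finset.coe_range, Set.mem_Iio] at ha hb
        omega
      have hre : (⋂ j ∈ Finset.range (k+1), {ω | label (w.take (m+j+1)) ω = true})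
          = ⋂ v ∈ (Finset.range (k+1)).image (fun j => w.take (m+j+1)),
              {ω | label v ω = true} := by
        rw [Finset.set_biInter_finset_image]
      have hpre : ∀ v : List (Fin 20), {ω | label v ω = true} = label v ⁻¹' {true} :=
        fun v => rfl
      simp only [hpre] at hre ⊢
      rw [hre, hindep.meas_biInter (fun v _ => ⟨{true}, trivial, rfl⟩)]
      have hb' : ∀ v : List (Fin 20), P (label v ⁻¹' {true}) = ENNReal.ofReal p := by
        intro v; rw [← hpre]; exact hbern v
      rw [Finset.prod_congr rfl (fun v _ => hb' v), Finset.prod_const,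
        Finset.card_image_of_injOn hiInj, Finset.card_range]
    have hWcard : W.card ≤ 20 ^ m * 4 ^ (k+1) := by
      refine le_trans Finset.card_image_le ?_
      have hsub : F ⊆ Fintype.piFinset
          (fun j : Fin n => if m ≤ (j:ℕ) then Sfin else Finset.univ) := by
        intro f hf
        rw [Fintype.mem_piFinset]
        intro j
        by_cases hj : m ≤ (j:ℕ)
        · simp only [hj, if_true, hSfin, Finset.mem_filter]
          exact ⟨Finset.mem_univ _, (Finset.mem_filter.mp hf).2 j hj⟩
        · simp [hj]
      refine le_trans (Finset.card_le_card hsub) ?_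
      rw [Fintype.card_piFinset]
      have hcards : ∀ j : Fin n,
          ((if m ≤ (j:ℕ) then Sfin else Finset.univ).card)
            = (fun i : ℕ => if m ≤ i then Sfin.card else 20) (j:ℕ) := by
        intro j; by_cases hj : m ≤ (j:ℕ) <;> simp [hj]
      rw [Finset.prod_congr rfl (fun j _ => hcards j),
        Fin.prod_univ_eq_prod_range (fun i => if m ≤ i then Sfin.card else 20) n,
        hn, Finset.prod_range_add]
      have h1 : (∏ i ∈ Finset.range m, if m ≤ i then Sfin.card else 20) = 20 ^ m := by
        rw [Finset.prod_congr rfl (fun i hi => ?_), Finset.prod_const, Finset.card_range]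
        rw [if_neg (by simpa using Finset.mem_range.mp hi)]
      rw [h1]
      refine Nat.mul_le_mul_left _ ?_
      refine le_trans (Finset.prod_le_prod' (g := fun _ => 4) ?_) ?_
      · intro i _
        rw [if_pos (by omega)]
        exact hScard
      · rw [Finset.prod_const, Finset.card_range]
    calc P {ω | Set.Ioo q r ⊆ proj3 1 0 0 '' mengerSet t label ω}
        ≤ P (⋃ w ∈ W, ⋂ j ∈ Finset.range (k+1),
            {ω | label (w.take (m+j+1)) ω = true}) := measure_mono hincl
      _ ≤ ∑ w ∈ W, P (⋂ j ∈ Finset.range (k+1),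
            {ω | label (w.take (m+j+1)) ω = true}) := measure_biUnion_finset_le _ _
      _ = ∑ _w ∈ W, (ENNReal.ofReal p) ^ (k+1) := Finset.sum_congr rfl hprob
      _ = W.card * (ENNReal.ofReal p) ^ (k+1) := by
          rw [Finset.sum_const, nsmul_eq_mul]
      _ ≤ ((20 ^ m * 4 ^ (k+1) : ℕ) : ℝ≥0∞) * (ENNReal.ofReal p) ^ (k+1) := by
          exact mul_le_mul_left (Nat.cast_le.mpr hWcard) _
      _ = (20 : ℝ≥0∞) ^ m * ((4 : ℝ≥0∞) * ENNReal.ofReal p) ^ (k+1) := by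
          push_cast
          rw [mul_pow]
          ring
  have hρ : (4 : ℝ≥0∞) * ENNReal.ofReal p < 1 := by
    have h4 : (4 : ℝ≥0∞) * ENNReal.ofReal p = ENNReal.ofReal (4 * p) := by
      rw [ENNReal.ofReal_mul (by norm_num : (0:ℝ) ≤ 4)]
      norm_num
    rw [h4]
    exact ENNReal.ofReal_lt_one.mpr (by norm_num at hp ⊢; linarith)
  have htend : Filter.Tendsto
      (fun k : ℕ => (20 : ℝ≥0∞) ^ m * ((4 : ℝ≥0∞) * ENNReal.ofReal p) ^ (k+1))
      Filter.atTop (nhds 0) := by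
    have h1 := ENNReal.tendsto_pow_atTop_nhds_zero_of_lt_one hρ
    have h2 := h1.comp (Filter.tendsto_add_atTop_nat 1)
    have h3 := ENNReal.Tendsto.const_mul (a := (20 : ℝ≥0∞) ^ m) h2
      (Or.inr (ENNReal.pow_ne_top (by norm_num : (20:ℝ≥0∞) ≠ ⊤)))
    simpa using h3
  exact le_antisymm (ge_of_tendsto' htend main) zero_le

end aux4
/-- **Theorem.** If `p < 0.25`, then the projection of the random Menger sponge onto the x-axis almost surely contains no nonempty open interval. -/
theorem menger_proj100_no_interval
    (t : Fin 20 → Fin 3 → ℝ) (htinj : Function.Injective t)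
    (htrange : Set.range t = mengerVecs)
    (p : ℝ) (hp : p < (0.25 : ℝ))
    {Ω : Type*} [MeasurableSpace Ω] (P : Measure Ω) [IsProbabilityMeasure P]
    (label : List (Fin 20) → Ω → Bool)
    (hmeas : ∀ w, Measurable (label w))
    (hindep : iIndepFun label P)
    (hbern : ∀ w : List (Fin 20), P {ω | label w ω = true} = ENNReal.ofReal p) :
    P {ω | ¬ ∃ x y : ℝ, x < y ∧
      Set.Ioo x y ⊆ proj3 1 0 0 '' mengerSet t label ω} = 1 := by
  classical
  set Bad : Set Ω := {ω | ∃ x y : ℝ, x < y ∧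
      Set.Ioo x y ⊆ proj3 1 0 0 '' mengerSet t label ω} with hBadDef
  have hBad : P Bad = 0 := by
    have hsub : Bad ⊆ ⋃ qr : ℚ × ℚ,
        {ω | ((qr.1 : ℝ) < (qr.2 : ℝ)) ∧
          Set.Ioo (qr.1 : ℝ) (qr.2 : ℝ) ⊆ proj3 1 0 0 '' mengerSet t label ω} := by
      rintro ω ⟨x, y, hxy, hsubS⟩
      obtain ⟨a, hxa, hay⟩ := exists_rat_btwn hxy
      obtain ⟨b, hab, hby⟩ := exists_rat_btwn hay
      refine Set.mem_iUnion.mpr ⟨(a, b), by exact_mod_cast hab, fun u hu => ?_⟩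
      exact hsubS ⟨lt_trans hxa hu.1, lt_trans hu.2 hby⟩
    refine measure_mono_null hsub (measure_iUnion_null fun qr => ?_)
    by_cases h : (qr.1 : ℝ) < (qr.2 : ℝ)
    · refine measure_mono_null (fun ω hω => hω.2)
        (interval_zero t htinj htrange p hp P label hindep hbern qr.1 qr.2 h)
    · have he : {ω : Ω | ((qr.1 : ℝ) < (qr.2 : ℝ)) ∧
          Set.Ioo (qr.1 : ℝ) (qr.2 : ℝ) ⊆ proj3 1 0 0 '' mengerSet t label ω} = ∅ := by
        ext ω; simp [h]
      rw [he, measure_empty]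
  have hcompl : {ω | ¬ ∃ x y : ℝ, x < y ∧
      Set.Ioo x y ⊆ proj3 1 0 0 '' mengerSet t label ω} = Badᶜ := rfl
  rw [hcompl]
  refine le_antisymm prob_le_one ?_
  calc (1 : ℝ≥0∞) = P Set.univ := (measure_univ).symm
    _ ≤ P Badᶜ + P Bad := by
        rw [← Set.compl_union_self Bad]; exact measure_union_le _ _
    _ = P Badᶜ := by rw [hBad, add_zero]
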